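/- Let v₀, v₁, v₂, v₃, v₄ ∈ ℝ² be in strictly convex position in this cyclic order. Assume lines (v₂v₃) and (v₃v₄) are not parallel to line (v₀v₁), and lines (v₂v₁) and (v₁v₀) are not parallel to line (v₄v₃). Define the two flag invariants x₃ = [v₀, v₁, (v₀v₁)∩(v₂v₃), (v₀v₁)∩(v₃v₄)] and x₄ = [v₄, v₃, (v₄v₃)∩(v₂v₁), (v₄v₃)∩(v₁v₀)]. Let ℓ be any line in ℝ² not passing through v₂ and not parallel to any of the four lines (v₂v₀), (v₂v₁), (v₂v₃), (v₂v₄), and let p_i = ℓ ∩ (v₂v_i) for i = 0,1,3,4. Then the vertex invariant χ(v₂) = [p₀, p₁, p₃, p₄] satisfies χ(v₂) = x₃ · x₄; i.e., the vertex invariant is the product of the invariants of the two adjacent flags. -/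

import Mathlib

set_option maxHeartbeats 1000000


/-!
The vertex invariant is the product of the invariants of the two adjacent flags:
`χ(v₂) = x₃ · x₄`.
-/

/-- Planar determinant (cross product) of two vectors of `ℝ²`. -/
def det2 (u v : ℝ × ℝ) : ℝ := u.1 * v.2 - u.2 * v.1

/-- Counterclockwise orientation of an ordered triple of points of `ℝ²`. -/
def ccw (a b c : ℝ × ℝ) : Prop := 0 < det2 (b - a) (c - a)

/-- Points `w 0, …, w (N-1)` are in strictly convex position in this
(counterclockwise) cyclic order: every ordered triple is counterclockwise. -/
def StrictlyConvexCCW {N : ℕ} (w : Fin N → ℝ × ℝ) : Prop :=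
  ∀ i j k : Fin N, i < j → j < k → ccw (w i) (w j) (w k)

/-- The point `p` lies on the line through `a` and `b`. -/
def onLine (a b p : ℝ × ℝ) : Prop := det2 (b - a) (p - a) = 0

/-- The inverse cross ratio of four real numbers. -/
noncomputable def invCR (a b c d : ℝ) : ℝ := ((a - b) * (c - d)) / ((a - c) * (b - d))

/-- Let `v₀,…,v₄` be in strictly convex position in this cyclic order, satisfying the
stated nonparallelism conditions.  Let
`x₃ = [v₀, v₁, (v₀v₁)∩(v₂v₃), (v₀v₁)∩(v₃v₄)]` (computed via the parametrization
`r ↦ v₀ + r•(v₁-v₀)`, in which the two intersection points have parameters `s`, `t`),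
and `x₄ = [v₄, v₃, (v₄v₃)∩(v₂v₁), (v₄v₃)∩(v₁v₀)]` (parametrization `r ↦ v₄ + r•(v₃-v₄)`,
intersection parameters `s'`, `t'`).  Let `ℓ = {w + r•u}` be a line not through `v₂`
and not parallel to any of the lines `(v₂v₀), (v₂v₁), (v₂v₃), (v₂v₄)`, and let
`p_i = ℓ ∩ (v₂v_i)` have parameter `r_i` on `ℓ`.  Then the vertex invariant
`χ(v₂) = [p₀, p₁, p₃, p₄]` equals `x₃ · x₄`. -/
private lemma auxA (a0 a1 a3 a4 b0 b1 b3 b4 c d01 d34 d03 d14 r0 r1 r3 r4 : ℝ)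
    (ha0 : a0 ≠ 0) (ha1 : a1 ≠ 0) (ha3 : a3 ≠ 0) (ha4 : a4 ≠ 0) (hc : c ≠ 0)
    (hd03 : d03 ≠ 0) (hd14 : d14 ≠ 0)
    (hr0 : r0 * a0 = b0) (hr1 : r1 * a1 = b1) (hr3 : r3 * a3 = b3) (hr4 : r4 * a4 = b4)
    (p01 : b0 * a1 - a0 * b1 = -(d01 * c)) (p34 : b3 * a4 - a3 * b4 = -(d34 * c))
    (p03 : b0 * a3 - a0 * b3 = -(d03 * c)) (p14 : b1 * a4 - a1 * b4 = -(d14 * c)) :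
    invCR r0 r1 r3 r4 = d01 * d34 / (d03 * d14) := by
  have e0 : r0 = b0 / a0 := by rw [eq_div_iff ha0]; exact hr0
  have e1 : r1 = b1 / a1 := by rw [eq_div_iff ha1]; exact hr1
  have e3 : r3 = b3 / a3 := by rw [eq_div_iff ha3]; exact hr3
  have e4 : r4 = b4 / a4 := by rw [eq_div_iff ha4]; exact hr4
  simp only [invCR, e0, e1, e3, e4]
  rw [div_sub_div _ _ ha0 ha1, div_sub_div _ _ ha3 ha4,
      div_sub_div _ _ ha0 ha3, div_sub_div _ _ ha1 ha4, p01, p34, p03, p14]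
  field_simp




private lemma auxB (X0 Y0 X1 Y1 X3 Y3 X4 Y4 s t s' t' : ℝ)
    (n1 : (X0 * Y3 - Y0 * X3) ≠ 0)
    (n2 : (X1 * Y4 - Y1 * X4) ≠ 0)
    (n3 : ((X0 * Y3 - Y0 * X3) - (X1 * Y3 - Y1 * X3)) ≠ 0)
    (n4 : ((X0 * Y4 - Y0 * X4) + (X1 * Y3 - Y1 * X3) - (X0 * Y3 - Y0 * X3) - (X1 * Y4 - Y1 * X4)) ≠ 0)
    (n5 : ((X1 * Y3 - Y1 * X3) + (X3 * Y4 - Y3 * X4) - (X1 * Y4 - Y1 * X4)) ≠ 0)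
    (n6 : ((X1 * Y3 - Y1 * X3) - (X1 * Y4 - Y1 * X4)) ≠ 0)
    (n7 : ((X0 * Y3 - Y0 * X3) - (X0 * Y4 - Y0 * X4) - (X1 * Y3 - Y1 * X3) + (X1 * Y4 - Y1 * X4)) ≠ 0)
    (n8 : ((X0 * Y3 - Y0 * X3) - (X0 * Y1 - Y0 * X1) - (X1 * Y3 - Y1 * X3)) ≠ 0)
    (hs : s * ((X0 * Y3 - Y0 * X3) - (X1 * Y3 - Y1 * X3)) = (X0 * Y3 - Y0 * X3))
    (ht : t * ((X0 * Y4 - Y0 * X4) + (X1 * Y3 - Y1 * X3) - (X0 * Y3 - Y0 * X3) - (X1 * Y4 - Y1 * X4)) = ((X0 * Y4 - Y0 * X4) - (X3 * Y4 - Y3 * X4) - (X0 * Y3 - Y0 * X3)))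
    (hs' : s' * ((X1 * Y3 - Y1 * X3) - (X1 * Y4 - Y1 * X4)) = -(X1 * Y4 - Y1 * X4))
    (ht' : t' * ((X0 * Y3 - Y0 * X3) - (X0 * Y4 - Y0 * X4) - (X1 * Y3 - Y1 * X3) + (X1 * Y4 - Y1 * X4)) = ((X0 * Y1 - Y0 * X1) + (X1 * Y4 - Y1 * X4) - (X0 * Y4 - Y0 * X4))) :
    (X0 * Y1 - Y0 * X1) * (X3 * Y4 - Y3 * X4) / ((X0 * Y3 - Y0 * X3) * (X1 * Y4 - Y1 * X4)) = invCR 0 1 s t * invCR 0 1 s' t' := by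
  have es : s = (X0 * Y3 - Y0 * X3) / ((X0 * Y3 - Y0 * X3) - (X1 * Y3 - Y1 * X3)) := by rw [eq_div_iff n3]; exact hs
  have et : t = ((X0 * Y4 - Y0 * X4) - (X3 * Y4 - Y3 * X4) - (X0 * Y3 - Y0 * X3)) / ((X0 * Y4 - Y0 * X4) + (X1 * Y3 - Y1 * X3) - (X0 * Y3 - Y0 * X3) - (X1 * Y4 - Y1 * X4)) := by rw [eq_div_iff n4]; exact ht
  have es' : s' = -(X1 * Y4 - Y1 * X4) / ((X1 * Y3 - Y1 * X3) - (X1 * Y4 - Y1 * X4)) := by rw [eq_div_iff n6]; exact hs'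
  have et' : t' = ((X0 * Y1 - Y0 * X1) + (X1 * Y4 - Y1 * X4) - (X0 * Y4 - Y0 * X4)) / ((X0 * Y3 - Y0 * X3) - (X0 * Y4 - Y0 * X4) - (X1 * Y3 - Y1 * X3) + (X1 * Y4 - Y1 * X4)) := by rw [eq_div_iff n7]; exact ht'
  have hs0 : (0:ℝ) - s ≠ 0 := by
    intro h
    apply n1
    rw [show s = 0 by linarith, zero_mul] at hs
    exact hs.symm
  have h1tmul : (1 - t) * ((X0 * Y4 - Y0 * X4) + (X1 * Y3 - Y1 * X3) - (X0 * Y3 - Y0 * X3) - (X1 * Y4 - Y1 * X4)) = ((X1 * Y3 - Y1 * X3) + (X3 * Y4 - Y3 * X4) - (X1 * Y4 - Y1 * X4)) := by linear_combination -ht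
  have h1t : (1:ℝ) - t ≠ 0 := by
    intro h
    apply n5
    rw [h, zero_mul] at h1tmul
    exact h1tmul.symm
  have hs'0 : (0:ℝ) - s' ≠ 0 := by
    intro h
    apply n2
    rw [show s' = 0 by linarith, zero_mul] at hs'
    exact neg_eq_zero.mp hs'.symm
  have h1t'mul : (1 - t') * ((X0 * Y3 - Y0 * X3) - (X0 * Y4 - Y0 * X4) - (X1 * Y3 - Y1 * X3) + (X1 * Y4 - Y1 * X4)) = ((X0 * Y3 - Y0 * X3) - (X0 * Y1 - Y0 * X1) - (X1 * Y3 - Y1 * X3)) := by linear_combination -ht'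
  have h1t' : (1:ℝ) - t' ≠ 0 := by
    intro h
    apply n8
    rw [h, zero_mul] at h1t'mul
    exact h1t'mul.symm
  have hx3 : invCR 0 1 s t = ((X0 * Y3 - Y0 * X3) * ((X0 * Y4 - Y0 * X4) + (X1 * Y3 - Y1 * X3) - (X0 * Y3 - Y0 * X3) - (X1 * Y4 - Y1 * X4)) - ((X0 * Y4 - Y0 * X4) - (X3 * Y4 - Y3 * X4) - (X0 * Y3 - Y0 * X3)) * ((X0 * Y3 - Y0 * X3) - (X1 * Y3 - Y1 * X3))) / ((X0 * Y3 - Y0 * X3) * ((X1 * Y3 - Y1 * X3) + (X3 * Y4 - Y3 * X4) - (X1 * Y4 - Y1 * X4))) := by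
    rw [invCR, div_eq_div_iff (mul_ne_zero hs0 h1t) (mul_ne_zero n1 n5)]
    apply mul_left_cancel₀ (mul_ne_zero n3 n4)
    linear_combination (-((X0 * Y3 - Y0 * X3) * ((X1 * Y3 - Y1 * X3) + (X3 * Y4 - Y3 * X4) - (X1 * Y4 - Y1 * X4))) * ((X0 * Y4 - Y0 * X4) + (X1 * Y3 - Y1 * X3) - (X0 * Y3 - Y0 * X3) - (X1 * Y4 - Y1 * X4)) + ((X0 * Y3 - Y0 * X3) * ((X0 * Y4 - Y0 * X4) + (X1 * Y3 - Y1 * X3) - (X0 * Y3 - Y0 * X3) - (X1 * Y4 - Y1 * X4)) - ((X0 * Y4 - Y0 * X4) - (X3 * Y4 - Y3 * X4) - (X0 * Y3 - Y0 * X3)) * ((X0 * Y3 - Y0 * X3) - (X1 * Y3 - Y1 * X3))) * (((X0 * Y4 - Y0 * X4) + (X1 * Y3 - Y1 * X3) - (X0 * Y3 - Y0 * X3) - (X1 * Y4 - Y1 * X4)) - t * ((X0 * Y4 - Y0 * X4) + (X1 * Y3 - Y1 * X3) - (X0 * Y3 - Y0 * X3) - (X1 * Y4 - Y1 * X4))))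 * hs + (((X0 * Y3 - Y0 * X3) * ((X1 * Y3 - Y1 * X3) + (X3 * Y4 - Y3 * X4) - (X1 * Y4 - Y1 * X4))) * ((X0 * Y3 - Y0 * X3) - (X1 * Y3 - Y1 * X3)) - ((X0 * Y3 - Y0 * X3) * ((X0 * Y4 - Y0 * X4) + (X1 * Y3 - Y1 * X3) - (X0 * Y3 - Y0 * X3) - (X1 * Y4 - Y1 * X4)) - ((X0 * Y4 - Y0 * X4) - (X3 * Y4 - Y3 * X4) - (X0 * Y3 - Y0 * X3)) * ((X0 * Y3 - Y0 * X3) - (X1 * Y3 - Y1 * X3))) * (X0 * Y3 - Y0 * X3)) * ht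
  have hx4 : invCR 0 1 s' t' = (-(X1 * Y4 - Y1 * X4) * ((X0 * Y3 - Y0 * X3) - (X0 * Y4 - Y0 * X4) - (X1 * Y3 - Y1 * X3) + (X1 * Y4 - Y1 * X4)) - ((X0 * Y1 - Y0 * X1) + (X1 * Y4 - Y1 * X4) - (X0 * Y4 - Y0 * X4)) * ((X1 * Y3 - Y1 * X3) - (X1 * Y4 - Y1 * X4))) / (-(X1 * Y4 - Y1 * X4) * ((X0 * Y3 - Y0 * X3) - (X0 * Y1 - Y0 * X1) - (X1 * Y3 - Y1 * X3))) := by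
    rw [invCR, div_eq_div_iff (mul_ne_zero hs'0 h1t') (mul_ne_zero (neg_ne_zero.mpr n2) n8)]
    apply mul_left_cancel₀ (mul_ne_zero n6 n7)
    linear_combination (-(-(X1 * Y4 - Y1 * X4) * ((X0 * Y3 - Y0 * X3) - (X0 * Y1 - Y0 * X1) - (X1 * Y3 - Y1 * X3))) * ((X0 * Y3 - Y0 * X3) - (X0 * Y4 - Y0 * X4) - (X1 * Y3 - Y1 * X3) + (X1 * Y4 - Y1 * X4)) + ((-(X1 * Y4 - Y1 * X4)) * ((X0 * Y3 - Y0 * X3) - (X0 * Y4 - Y0 * X4) - (X1 * Y3 - Y1 * X3) + (X1 * Y4 - Y1 * X4)) - ((X0 * Y1 - Y0 * X1) + (X1 * Y4 - Y1 * X4) - (X0 * Y4 - Y0 * X4)) * ((X1 * Y3 - Y1 * X3) - (X1 * Y4 - Y1 * X4))) * (((X0 * Y3 - Y0 * X3) - (X0 * Y4 - Y0 * X4) - (X1 * Y3 - Y1 * X3) + (X1 * Y4 - Y1 * X4)) - t' * ((X0 * Y3 - Y0 * X3) - (X0 * Y4 - Y0 * X4) - (X1 * Y3 - Y1 * X3)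 + (X1 * Y4 - Y1 * X4)))) * hs' + ((-(X1 * Y4 - Y1 * X4) * ((X0 * Y3 - Y0 * X3) - (X0 * Y1 - Y0 * X1) - (X1 * Y3 - Y1 * X3))) * ((X1 * Y3 - Y1 * X3) - (X1 * Y4 - Y1 * X4)) - ((-(X1 * Y4 - Y1 * X4)) * ((X0 * Y3 - Y0 * X3) - (X0 * Y4 - Y0 * X4) - (X1 * Y3 - Y1 * X3) + (X1 * Y4 - Y1 * X4)) - ((X0 * Y1 - Y0 * X1) + (X1 * Y4 - Y1 * X4) - (X0 * Y4 - Y0 * X4)) * ((X1 * Y3 - Y1 * X3) - (X1 * Y4 - Y1 * X4))) * (-(X1 * Y4 - Y1 * X4))) * ht'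
  rw [hx3, hx4, div_mul_div_comm,
    div_eq_div_iff (mul_ne_zero n1 n2)
      (mul_ne_zero (mul_ne_zero n1 n5) (mul_ne_zero (neg_ne_zero.mpr n2) n8))]
  ring


theorem vertex_invariant_eq_product_of_flags (v : Fin 5 → ℝ × ℝ)
    (hconv : StrictlyConvexCCW v)
    (h23 : det2 (v 3 - v 2) (v 1 - v 0) ≠ 0)
    (h34 : det2 (v 4 - v 3) (v 1 - v 0) ≠ 0)
    (h21 : det2 (v 1 - v 2) (v 3 - v 4) ≠ 0)
    (h10 : det2 (v 0 - v 1) (v 3 - v 4) ≠ 0)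
    (w u : ℝ × ℝ) (hu : u ≠ 0)
    (hv2 : ∀ r : ℝ, w + r • u ≠ v 2)
    (hpar : ∀ i : Fin 5, i ≠ 2 → det2 u (v i - v 2) ≠ 0)
    (s t s' t' r₀ r₁ r₃ r₄ : ℝ)
    (hs : onLine (v 2) (v 3) (v 0 + s • (v 1 - v 0)))
    (ht : onLine (v 3) (v 4) (v 0 + t • (v 1 - v 0)))
    (hs' : onLine (v 2) (v 1) (v 4 + s' • (v 3 - v 4)))
    (ht' : onLine (v 1) (v 0) (v 4 + t' • (v 3 - v 4)))
    (hr₀ : onLine (v 2) (v 0) (w + r₀ • u))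
    (hr₁ : onLine (v 2) (v 1) (w + r₁ • u))
    (hr₃ : onLine (v 2) (v 3) (w + r₃ • u))
    (hr₄ : onLine (v 2) (v 4) (w + r₄ • u)) :
    invCR r₀ r₁ r₃ r₄ = invCR 0 1 s t * invCR 0 1 s' t' := by
  have h023 := hconv 0 2 3 (by decide) (by decide)
  have h124 := hconv 1 2 4 (by decide) (by decide)
  have h134 := hconv 1 3 4 (by decide) (by decide)
  have h013 := hconv 0 1 3 (by decide) (by decide)
  have hp0 := hpar 0 (by decide)
  have hp1 := hpar 1 (by decide)
  have hp3 := hpar 3 (by decide)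
  have hp4 := hpar 4 (by decide)
  clear hconv hpar
  obtain ⟨x0, y0, h0⟩ : ∃ a b, v 0 = (a, b) := ⟨(v 0).1, (v 0).2, rfl⟩
  obtain ⟨x1, y1, h1⟩ : ∃ a b, v 1 = (a, b) := ⟨(v 1).1, (v 1).2, rfl⟩
  obtain ⟨x2, y2, h2⟩ : ∃ a b, v 2 = (a, b) := ⟨(v 2).1, (v 2).2, rfl⟩
  obtain ⟨x3, y3, h3⟩ : ∃ a b, v 3 = (a, b) := ⟨(v 3).1, (v 3).2, rfl⟩
  obtain ⟨x4, y4, h4⟩ : ∃ a b, v 4 = (a, b) := ⟨(v 4).1, (v 4).2, rfl⟩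
  obtain ⟨wx, wy⟩ := w
  obtain ⟨ux, uy⟩ := u
  have hu' : ¬(ux = 0 ∧ uy = 0) := by simpa [Prod.ext_iff] using hu
  simp only [h0, h1, h2, h3, h4, ccw, onLine, det2, Prod.fst_sub, Prod.snd_sub,
    Prod.fst_add, Prod.snd_add, Prod.smul_fst, Prod.smul_snd, smul_eq_mul, Prod.mk.injEq,
    not_and]
    at h023 h124 h134 h013 hp0 hp1 hp3 hp4 h23 h34 h21 h10 hv2 hs ht hs' ht' hr₀ hr₁ hr₃ hr₄
  have hc : ((wx - x2) * uy - (wy - y2) * ux) ≠ 0 := by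
    intro hcc
    rcases not_and_or.mp hu' with hux | huy
    · refine hv2 ((x2 - wx) / ux) (Prod.ext_iff.mpr ⟨?_, ?_⟩)
      · simp only [Prod.fst_add, Prod.smul_fst, smul_eq_mul]
        field_simp
        ring
      · simp only [Prod.snd_add, Prod.smul_snd, smul_eq_mul]
        field_simp
        linear_combination -hcc
    · refine hv2 ((y2 - wy) / uy) (Prod.ext_iff.mpr ⟨?_, ?_⟩)
      · simp only [Prod.fst_add, Prod.smul_fst, smul_eq_mul]
        field_simp
        linear_combination hcc
      · simp only [Prod.snd_add, Prod.smul_snd, smul_eq_mul]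
        field_simp
        ring
  have hd03 : ((x0 - x2) * (y3 - y2) - (y0 - y2) * (x3 - x2)) ≠ 0 := by intro h; nlinarith [h023, h]
  have hd14 : ((x1 - x2) * (y4 - y2) - (y1 - y2) * (x4 - x2)) ≠ 0 := by intro h; nlinarith [h124, h]
  have hn5 : (((x1 - x2) * (y3 - y2) - (y1 - y2) * (x3 - x2)) + ((x3 - x2) * (y4 - y2) - (y3 - y2) * (x4 - x2)) - ((x1 - x2) * (y4 - y2) - (y1 - y2) * (x4 - x2))) ≠ 0 := by intro h; nlinarith [h134, h]
  have hn8 : (((x0 - x2) * (y3 - y2) - (y0 - y2) * (x3 - x2)) - ((x0 - x2) * (y1 - y2) - (y0 - y2) * (x1 - x2)) - ((x1 - x2) * (y3 - y2) - (y1 - y2) * (x3 - x2))) ≠ 0 := by intro h; nlinarith [h013, h]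
  have hA : invCR r₀ r₁ r₃ r₄ = ((x0 - x2) * (y1 - y2) - (y0 - y2) * (x1 - x2)) * ((x3 - x2) * (y4 - y2) - (y3 - y2) * (x4 - x2)) / (((x0 - x2) * (y3 - y2) - (y0 - y2) * (x3 - x2)) * ((x1 - x2) * (y4 - y2) - (y1 - y2) * (x4 - x2))) := by
    refine auxA ((x0 - x2) * uy - (y0 - y2) * ux) ((x1 - x2) * uy - (y1 - y2) * ux) ((x3 - x2) * uy - (y3 - y2) * ux) ((x4 - x2) * uy - (y4 - y2) * ux) ((y0 - y2) * (wx - x2) - (x0 - x2) * (wy - y2)) ((y1 - y2) * (wx - x2) - (x1 - x2) * (wy - y2)) ((y3 - y2) * (wx - x2) - (x3 - x2) * (wy - y2)) ((y4 - y2) * (wx - x2) - (x4 - x2) * (wy - y2)) ((wx - x2) * uy - (wy - y2) * ux)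
      ((x0 - x2) * (y1 - y2) - (y0 - y2) * (x1 - x2)) ((x3 - x2) * (y4 - y2) - (y3 - y2) * (x4 - x2)) ((x0 - x2) * (y3 - y2) - (y0 - y2) * (x3 - x2)) ((x1 - x2) * (y4 - y2) - (y1 - y2) * (x4 - x2)) r₀ r₁ r₃ r₄
      ?_ ?_ ?_ ?_ hc hd03 hd14 ?_ ?_ ?_ ?_ (by ring) (by ring) (by ring) (by ring)
    · intro h; exact hp0 (by linear_combination -h)
    · intro h; exact hp1 (by linear_combination -h)
    · intro h; exact hp3 (by linear_combination -h)
    · intro h; exact hp4 (by linear_combination -h)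
    · linear_combination hr₀
    · linear_combination hr₁
    · linear_combination hr₃
    · linear_combination hr₄
  rw [hA]
  refine auxB (x0 - x2) (y0 - y2) (x1 - x2) (y1 - y2) (x3 - x2) (y3 - y2) (x4 - x2) (y4 - y2) s t s' t'
    hd03 hd14 ?_ ?_ hn5 ?_ ?_ hn8 ?_ ?_ ?_ ?_
  · intro h; exact h23 (by linear_combination h)
  · intro h; exact h34 (by linear_combination h)
  · intro h; exact h21 (by linear_combination h)
  · intro h; exact h10 (by linear_combination h)
  · linear_combination hs
  · linear_combination ht
  · linear_combination hs'
  · linear_combination ht'
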